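/- arXiv:2402.07509 — 3 statements merged into one kernel-verified Lean document; each statement's English description precedes it below -/
import Mathlib

section
/- Let N be a norm on ℝ^d, u with N(u)=1, H a linear hyperplane with N(u+w) ≥ 1 for all w ∈ H, and K_η(u) = {v ∈ H : N(u+v) ≤ 1+η}, with |K_η(u)| its (d-1)-dimensional Lebesgue measure. Then the map η ↦ |K_η(u)|^{1/(d-1)} is concave on (0, ∞). -/
open MeasureTheory Pointwise ENNReal


theorem bm1_cpt {K L : Set ℝ} (hK : IsCompact K) (hL : IsCompact L)
    (hKne : K.Nonempty) (hLne : L.Nonempty) :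
    volume K + volume L ≤ volume (K + L) := by
  set a := sSup K with ha
  set b := sInf L with hb
  have haK : a ∈ K := hK.sSup_mem hKne
  have hbL : b ∈ L := hL.sInf_mem hLne
  set A : Set ℝ := (fun x => -b + x) ⁻¹' K with hA
  set B : Set ℝ := (fun x => -a + x) ⁻¹' L with hB
  have hAm : MeasurableSet A := hK.measurableSet.preimage (measurable_const_add _)
  have hBm : MeasurableSet B := hL.measurableSet.preimage (measurable_const_add _)
  have hvA : volume A = volume K := measure_preimage_add volume _ K
  have hvB : volume B = volume L := measure_preimage_add volume _ L
  have hsub : A ∪ B ⊆ K + L := by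
    rintro x (hx | hx)
    · have : x = (-b + x) + b := by ring
      rw [this]; exact Set.add_mem_add hx hbL
    · have : x = a + (-a + x) := by ring
      rw [this]; exact Set.add_mem_add haK hx
  have hcap : A ∩ B ⊆ {a + b} := by
    rintro x ⟨hxA, hxB⟩
    have h1 : -b + x ≤ a := le_csSup hK.bddAbove hxA
    have h2 : b ≤ -a + x := csInf_le hL.bddBelow hxB
    have : x = a + b := by linarith
    simp [this]
  have hcap0 : volume (A ∩ B) = 0 :=
    le_antisymm (le_trans (measure_mono hcap) (by simp)) (zero_le)
  have hdiff : volume (A \ B) = volume A := by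
    have := measure_diff_add_inter A hBm (μ := volume)
    rw [hcap0, add_zero] at this
    exact this
  have hunion : volume (A ∪ B) = volume A + volume B := by
    rw [Set.union_comm, ← Set.union_diff_self, measure_union disjoint_sdiff_self_right (hAm.diff hBm), hdiff, add_comm]
  calc volume K + volume L = volume (A ∪ B) := by rw [hunion, hvA, hvB]
    _ ≤ volume (K + L) := measure_mono hsub

/-- 1-D Brunn-Minkowski for measurable sets, with a measurable superset of the sumset. -/
theorem bm1_sets {S T W : Set ℝ} (hS : MeasurableSet S) (hT : MeasurableSet T)
    (hW : MeasurableSet W) (hSne : S.Nonempty) (hTne : T.Nonempty)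
    (hsub : S + T ⊆ W) : volume S + volume T ≤ volume W := by
  obtain ⟨s₀, hs₀⟩ := hSne
  obtain ⟨t₀, ht₀⟩ := hTne
  rw [hS.measure_eq_iSup_isCompact, hT.measure_eq_iSup_isCompact]
  have hone : ∀ (K : Set ℝ), K ⊆ S → volume K ≤ volume W := by
    intro K hKS
    have h1 : K ⊆ (fun x => x + t₀) ⁻¹' W := fun x hx => hsub (Set.add_mem_add (hKS hx) ht₀)
    calc volume K ≤ volume ((fun x => x + t₀) ⁻¹' W) := measure_mono h1
      _ = volume W := measure_preimage_add_right volume _ W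
  have htwo : ∀ (L : Set ℝ), L ⊆ T → volume L ≤ volume W := by
    intro L hLT
    have h1 : L ⊆ (fun x => s₀ + x) ⁻¹' W := fun x hx => hsub (Set.add_mem_add hs₀ (hLT hx))
    calc volume L ≤ volume ((fun x => s₀ + x) ⁻¹' W) := measure_mono h1
      _ = volume W := measure_preimage_add volume _ W
  refine ENNReal.iSup_add_iSup_le ?_
  intro K L
  by_cases hKS : K ⊆ S
  swap
  · rw [iSup_neg hKS, bot_eq_zero, zero_add]
    exact iSup₂_le fun h1 _ => htwo L h1
  by_cases hKc : IsCompact K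
  swap
  · rw [iSup_pos hKS, iSup_neg hKc, bot_eq_zero, zero_add]
    exact iSup₂_le fun h1 _ => htwo L h1
  by_cases hLT : L ⊆ T
  swap
  · rw [iSup_neg hLT, bot_eq_zero, add_zero]
    exact iSup₂_le fun h1 _ => hone K h1
  by_cases hLc : IsCompact L
  swap
  · rw [iSup_pos hLT, iSup_neg hLc, bot_eq_zero, add_zero]
    exact iSup₂_le fun h1 _ => hone K h1
  rw [iSup_pos hKS, iSup_pos hKc, iSup_pos hLT, iSup_pos hLc]
  rcases K.eq_empty_or_nonempty with hKe | hKne'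
  · rw [hKe, measure_empty, zero_add]; exact htwo L hLT
  rcases L.eq_empty_or_nonempty with hLe | hLne'
  · rw [hLe, measure_empty, add_zero]; exact hone K hKS
  calc volume K + volume L ≤ volume (K + L) := bm1_cpt hKc hLc hKne' hLne'
    _ ≤ volume W := measure_mono ((Set.add_subset_add hKS hLT).trans hsub)

/-- Layer-cake for `ℝ≥0∞`-valued functions on `ℝ`. -/
theorem layercake_enn {f : ℝ → ℝ≥0∞} (hf : Measurable f) :
    ∫⁻ x, f x = ∫⁻ t in Set.Ioi (0:ℝ), volume {x | ENNReal.ofReal t < f x} := by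
  set F : ℝ → ℝ → ℝ≥0∞ := fun t x => Set.indicator {x | ENNReal.ofReal t < f x} 1 x with hF
  have hmeas : ∀ t, MeasurableSet {x | ENNReal.ofReal t < f x} := by
    intro t
    exact measurableSet_lt measurable_const hf
  have hmeas' : ∀ x, MeasurableSet {t : ℝ | ENNReal.ofReal t < f x} := by
    intro x
    exact measurableSet_lt ENNReal.measurable_ofReal measurable_const
  have hFm : Measurable (Function.uncurry F) := by
    have : Function.uncurry F = fun p : ℝ × ℝ =>
        if ENNReal.ofReal p.1 < f p.2 then (1 : ℝ≥0∞) else 0 := by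
      ext p
      simp [Function.uncurry, hF, Set.indicator_apply]
    rw [this]
    exact Measurable.ite
      (measurableSet_lt (ENNReal.measurable_ofReal.comp measurable_fst) (hf.comp measurable_snd))
      measurable_const measurable_const
  have stepA : ∀ t, ∫⁻ x, F t x = volume {x | ENNReal.ofReal t < f x} := by
    intro t
    exact lintegral_indicator_one (hmeas t)
  have stepB : ∀ x, ∫⁻ t in Set.Ioi (0:ℝ), F t x = f x := by
    intro x
    have h1 : ∀ t : ℝ, F t x = Set.indicator {t : ℝ | ENNReal.ofReal t < f x} 1 t := by
      intro t
      simp [hF, Set.indicator_apply]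
    calc ∫⁻ t in Set.Ioi (0:ℝ), F t x
        = ∫⁻ t in Set.Ioi (0:ℝ), Set.indicator {t : ℝ | ENNReal.ofReal t < f x} 1 t := by
          exact lintegral_congr h1
      _ = volume ({t : ℝ | ENNReal.ofReal t < f x} ∩ Set.Ioi 0) := by
          rw [lintegral_indicator_one (hmeas' x), Measure.restrict_apply (hmeas' x)]
      _ = f x := by
          rcases eq_or_ne (f x) ∞ with hfx | hfx
          · have : {t : ℝ | ENNReal.ofReal t < f x} = Set.univ := by
              ext t; simp [hfx, ENNReal.ofReal_lt_top]
            rw [this, Set.univ_inter, Real.volume_Ioi, hfx]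
          · have : {t : ℝ | ENNReal.ofReal t < f x} ∩ Set.Ioi 0
                = Set.Ioo 0 (f x).toReal := by
              ext t
              simp only [Set.mem_inter_iff, Set.mem_setOf_eq, Set.mem_Ioi, Set.mem_Ioo]
              constructor
              · rintro ⟨h1', h2⟩
                exact ⟨h2, (ENNReal.ofReal_lt_iff_lt_toReal h2.le hfx).mp h1'⟩
              · rintro ⟨h1', h2⟩
                exact ⟨(ENNReal.ofReal_lt_iff_lt_toReal h1'.le hfx).mpr h2, h1'⟩
            rw [this, Real.volume_Ioo, sub_zero, ENNReal.ofReal_toReal hfx]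
  calc ∫⁻ x, f x = ∫⁻ x, ∫⁻ t in Set.Ioi (0:ℝ), F t x := by
        exact (lintegral_congr stepB).symm
    _ = ∫⁻ t in Set.Ioi (0:ℝ), ∫⁻ x, F t x := by
        exact (lintegral_lintegral_swap hFm.aemeasurable).symm
    _ = ∫⁻ t in Set.Ioi (0:ℝ), volume {x | ENNReal.ofReal t < f x} := by
        exact lintegral_congr stepA

theorem egeom2 {w₁ w₂ : ℝ} (hw₁ : 0 ≤ w₁) (hw₂ : 0 ≤ w₂) (hw : w₁ + w₂ = 1)
    (p₁ p₂ : ℝ≥0∞) :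
    p₁ ^ w₁ * p₂ ^ w₂ ≤ ENNReal.ofReal w₁ * p₁ + ENNReal.ofReal w₂ * p₂ := by
  rcases eq_or_ne p₁ ∞ with h1 | h1
  · rcases eq_or_lt_of_le hw₁ with hw0 | hw0
    · have hw2 : w₂ = 1 := by linarith
      simp [← hw0, hw2, h1]
    · have : ENNReal.ofReal w₁ * p₁ = ∞ := by
        rw [h1, ENNReal.mul_top (by simp [ENNReal.ofReal_eq_zero]; linarith)]
      rw [this, top_add]
      exact le_top
  rcases eq_or_ne p₂ ∞ with h2 | h2
  · rcases eq_or_lt_of_le hw₂ with hw0 | hw0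
    · have hw1 : w₁ = 1 := by linarith
      simp [← hw0, hw1, h2]
    · have : ENNReal.ofReal w₂ * p₂ = ∞ := by
        rw [h2, ENNReal.mul_top (by simp [ENNReal.ofReal_eq_zero]; linarith)]
      rw [this, add_top]
      exact le_top
  · -- finite case
    lift p₁ to NNReal using h1
    lift p₂ to NNReal using h2
    have key := NNReal.geom_mean_le_arith_mean2_weighted (w₁ := w₁.toNNReal)
      (w₂ := w₂.toNNReal) (p₁ := p₁) (p₂ := p₂) ?_
    · have c1 : ((w₁.toNNReal : ℝ)) = w₁ := Real.coe_toNNReal _ hw₁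
      have c2 : ((w₂.toNNReal : ℝ)) = w₂ := Real.coe_toNNReal _ hw₂
      rw [c1, c2] at key
      calc (p₁ : ℝ≥0∞) ^ w₁ * (p₂ : ℝ≥0∞) ^ w₂
          = ((p₁ ^ w₁ * p₂ ^ w₂ : NNReal) : ℝ≥0∞) := by
            rw [ENNReal.coe_mul, ENNReal.coe_rpow_of_nonneg _ hw₁,
              ENNReal.coe_rpow_of_nonneg _ hw₂]
        _ ≤ ((w₁.toNNReal * p₁ + w₂.toNNReal * p₂ : NNReal) : ℝ≥0∞) := by
            exact_mod_cast ENNReal.coe_le_coe.mpr key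
        _ = ENNReal.ofReal w₁ * p₁ + ENNReal.ofReal w₂ * p₂ := by
            rw [ENNReal.coe_add, ENNReal.coe_mul, ENNReal.coe_mul]
            rfl
    · rw [← Real.toNNReal_add hw₁ hw₂, hw, Real.toNNReal_one]

theorem PL1_core {lam : ℝ} (hl0 : 0 < lam) (hl1 : lam < 1)
    {f g h : ℝ → ℝ≥0∞} (hf : Measurable f) (hg : Measurable g) (hh : Measurable h)
    (hf1 : ∀ x, f x ≤ 1) (hg1 : ∀ x, g x ≤ 1)
    (hfs : (⨆ x, f x) = 1) (hgs : (⨆ x, g x) = 1)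
    (H : ∀ x y, f x ^ (1 - lam) * g y ^ lam ≤ h ((1 - lam) * x + lam * y)) :
    (∫⁻ x, f x) ^ (1 - lam) * (∫⁻ x, g x) ^ lam ≤ ∫⁻ x, h x := by
  set Sf : ℝ → Set ℝ := fun t => {x | ENNReal.ofReal t < f x} with hSf
  set Sg : ℝ → Set ℝ := fun t => {x | ENNReal.ofReal t < g x} with hSg
  set Sh : ℝ → Set ℝ := fun t => {x | ENNReal.ofReal t < h x} with hSh
  have hmf : ∀ t, MeasurableSet (Sf t) := fun t => measurableSet_lt measurable_const hf
  have hmg : ∀ t, MeasurableSet (Sg t) := fun t => measurableSet_lt measurable_const hg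
  have hmh : ∀ t, MeasurableSet (Sh t) := fun t => measurableSet_lt measurable_const hh
  have hantif : Antitone (fun t => volume (Sf t)) := by
    intro s t hst
    exact measure_mono (fun x hx => lt_of_le_of_lt (ENNReal.ofReal_le_ofReal hst) hx)
  have hantig : Antitone (fun t => volume (Sg t)) := by
    intro s t hst
    exact measure_mono (fun x hx => lt_of_le_of_lt (ENNReal.ofReal_le_ofReal hst) hx)
  have hantih : Antitone (fun t => volume (Sh t)) := by
    intro s t hst
    exact measure_mono (fun x hx => lt_of_le_of_lt (ENNReal.ofReal_le_ofReal hst) hx)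
  -- the key pointwise inequality on (0,1)
  have key : ∀ t ∈ Set.Ioo (0:ℝ) 1,
      ENNReal.ofReal (1 - lam) * volume (Sf t) + ENNReal.ofReal lam * volume (Sg t)
        ≤ volume (Sh t) := by
    rintro t ⟨ht0, ht1⟩
    have hct0 : (0:ℝ≥0∞) < ENNReal.ofReal t := ENNReal.ofReal_pos.mpr ht0
    have hct1 : ENNReal.ofReal t < 1 := ENNReal.ofReal_lt_one.mpr ht1
    have hfne : (Sf t).Nonempty := by
      have : ENNReal.ofReal t < ⨆ x, f x := by rw [hfs]; exact hct1
      obtain ⟨x, hx⟩ := lt_iSup_iff.mp this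
      exact ⟨x, hx⟩
    have hgne : (Sg t).Nonempty := by
      have : ENNReal.ofReal t < ⨆ x, g x := by rw [hgs]; exact hct1
      obtain ⟨x, hx⟩ := lt_iSup_iff.mp this
      exact ⟨x, hx⟩
    have hsub : (1 - lam) • Sf t + lam • Sg t ⊆ Sh t := by
      rintro z ⟨u, hu, v, hv, rfl⟩
      obtain ⟨x, hx, rfl⟩ := hu
      obtain ⟨y, hy, rfl⟩ := hv
      have hgy1 : g y ≤ 1 := hg1 y
      have hgyt : g y ≠ ∞ := ne_top_of_le_ne_top ENNReal.one_ne_top hgy1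
      have hstep1 : ENNReal.ofReal t = ENNReal.ofReal t ^ (1 - lam) * ENNReal.ofReal t ^ lam := by
        rw [← ENNReal.rpow_add _ _ (ne_of_gt hct0) ENNReal.ofReal_ne_top]
        norm_num
      have hstep2 : ENNReal.ofReal t ^ (1 - lam) * ENNReal.ofReal t ^ lam
          < f x ^ (1 - lam) * g y ^ lam := by
        have hgl : ENNReal.ofReal t ^ lam < g y ^ lam := ENNReal.rpow_lt_rpow hy hl0
        have hfl : ENNReal.ofReal t ^ (1 - lam) < f x ^ (1 - lam) :=
          ENNReal.rpow_lt_rpow hx (by linarith)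
        calc ENNReal.ofReal t ^ (1 - lam) * ENNReal.ofReal t ^ lam
            ≤ ENNReal.ofReal t ^ (1 - lam) * g y ^ lam := mul_le_mul_right hgl.le _
          _ < f x ^ (1 - lam) * g y ^ lam := by
              refine ENNReal.mul_lt_mul_left ?_ ?_ hfl
              · exact ne_of_gt (ENNReal.rpow_pos (lt_trans hct0 hy) hgyt)
              · exact ENNReal.rpow_ne_top_of_nonneg hl0.le hgyt
      have : ENNReal.ofReal t < h ((1 - lam) * x + lam * y) :=
        lt_of_lt_of_le (by rw [hstep1]; exact hstep2) (H x y)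
      exact this
    have hvol1 : volume ((1 - lam) • Sf t) = ENNReal.ofReal (1 - lam) * volume (Sf t) := by
      rw [Measure.addHaar_smul volume, Module.finrank_self, pow_one,
        abs_of_pos (by linarith : (0:ℝ) < 1 - lam)]
    have hvol2 : volume (lam • Sg t) = ENNReal.ofReal lam * volume (Sg t) := by
      rw [Measure.addHaar_smul volume, Module.finrank_self, pow_one, abs_of_pos hl0]
    calc ENNReal.ofReal (1 - lam) * volume (Sf t) + ENNReal.ofReal lam * volume (Sg t)
        = volume ((1 - lam) • Sf t) + volume (lam • Sg t) := by rw [hvol1, hvol2]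
      _ ≤ volume (Sh t) :=
          bm1_sets ((hmf t).const_smul₀ (1 - lam))
            ((hmg t).const_smul₀ lam) (hmh t)
            (hfne.smul_set) (hgne.smul_set) hsub
  -- layer cake representations
  have hdisj : Disjoint (Set.Ioo (0:ℝ) 1) (Set.Ici (1:ℝ)) := by
    rw [Set.disjoint_left]
    rintro t ⟨_, h2⟩ h3
    exact absurd h3 (not_le.mpr h2)
  have hsplit : ∀ (F : ℝ → ℝ≥0∞), ∫⁻ t in Set.Ioi (0:ℝ), F t
      = (∫⁻ t in Set.Ioo (0:ℝ) 1, F t) + ∫⁻ t in Set.Ici (1:ℝ), F t := by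
    intro F
    rw [← lintegral_union measurableSet_Ici hdisj, Set.Ioo_union_Ici_eq_Ioi (by norm_num : (0:ℝ) < 1)]
  have hftail : ∫⁻ t in Set.Ici (1:ℝ), volume (Sf t) = 0 := by
    rw [setLIntegral_congr_fun measurableSet_Ici (fun t ht => ?_), lintegral_zero]
    have : Sf t = ∅ := by
      ext x
      simp only [hSf, Set.mem_setOf_eq, Set.mem_empty_iff_false, iff_false, not_lt]
      exact le_trans (hf1 x) (ENNReal.one_le_ofReal.mpr ht)
    rw [this, measure_empty]
  have hgtail : ∫⁻ t in Set.Ici (1:ℝ), volume (Sg t) = 0 := by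
    rw [setLIntegral_congr_fun measurableSet_Ici (fun t ht => ?_), lintegral_zero]
    have : Sg t = ∅ := by
      ext x
      simp only [hSg, Set.mem_setOf_eq, Set.mem_empty_iff_false, iff_false, not_lt]
      exact le_trans (hg1 x) (ENNReal.one_le_ofReal.mpr ht)
    rw [this, measure_empty]
  have hfrep : ∫⁻ x, f x = ∫⁻ t in Set.Ioo (0:ℝ) 1, volume (Sf t) := by
    rw [layercake_enn hf, hsplit, hftail, add_zero]
  have hgrep : ∫⁻ x, g x = ∫⁻ t in Set.Ioo (0:ℝ) 1, volume (Sg t) := by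
    rw [layercake_enn hg, hsplit, hgtail, add_zero]
  have hhrep : (∫⁻ t in Set.Ioo (0:ℝ) 1, volume (Sh t)) ≤ ∫⁻ x, h x := by
    rw [layercake_enn hh]
    exact lintegral_mono_set Set.Ioo_subset_Ioi_self
  -- put everything together
  calc (∫⁻ x, f x) ^ (1 - lam) * (∫⁻ x, g x) ^ lam
      ≤ ENNReal.ofReal (1 - lam) * (∫⁻ x, f x) + ENNReal.ofReal lam * (∫⁻ x, g x) :=
        egeom2 (by linarith) hl0.le (by ring) _ _
    _ = ∫⁻ t in Set.Ioo (0:ℝ) 1,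
        (ENNReal.ofReal (1 - lam) * volume (Sf t) + ENNReal.ofReal lam * volume (Sg t)) := by
        rw [hfrep, hgrep, lintegral_add_left (hantif.measurable.const_mul _),
          lintegral_const_mul _ hantif.measurable, lintegral_const_mul _ hantig.measurable]
    _ ≤ ∫⁻ t in Set.Ioo (0:ℝ) 1, volume (Sh t) :=
        setLIntegral_mono hantih.measurable key
    _ ≤ ∫⁻ x, h x := hhrep

theorem PL1_bdd {lam : ℝ} (hl0 : 0 < lam) (hl1 : lam < 1)
    {f g h : ℝ → ℝ≥0∞} (hf : Measurable f) (hg : Measurable g) (hh : Measurable h)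
    (hbf : (⨆ x, f x) ≠ ∞) (hbg : (⨆ x, g x) ≠ ∞)
    (H : ∀ x y, f x ^ (1 - lam) * g y ^ lam ≤ h ((1 - lam) * x + lam * y)) :
    (∫⁻ x, f x) ^ (1 - lam) * (∫⁻ x, g x) ^ lam ≤ ∫⁻ x, h x := by
  by_cases hif : ∫⁻ x, f x = 0
  · simp [hif, ENNReal.zero_rpow_of_pos (by linarith : (0:ℝ) < 1 - lam)]
  by_cases hig : ∫⁻ x, g x = 0
  · simp [hig, ENNReal.zero_rpow_of_pos hl0]
  set a := ⨆ x, f x with ha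
  set b := ⨆ x, g x with hb
  have ha0 : a ≠ 0 := by
    intro h0
    apply hif
    have : ∀ x, f x = 0 := fun x => le_antisymm (h0 ▸ le_iSup f x) (zero_le)
    simp [lintegral_congr this]
  have hb0 : b ≠ 0 := by
    intro h0
    apply hig
    have : ∀ x, g x = 0 := fun x => le_antisymm (h0 ▸ le_iSup g x) (zero_le)
    simp [lintegral_congr this]
  have hapos : 0 < a := pos_iff_ne_zero.mpr ha0
  have hbpos : 0 < b := pos_iff_ne_zero.mpr hb0
  set c := a ^ (1 - lam) * b ^ lam with hc
  have hane : a ^ (1 - lam) ≠ 0 := ne_of_gt (ENNReal.rpow_pos hapos hbf)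
  have haT : a ^ (1 - lam) ≠ ∞ := ENNReal.rpow_ne_top_of_nonneg (by linarith) hbf
  have hbne : b ^ lam ≠ 0 := ne_of_gt (ENNReal.rpow_pos hbpos hbg)
  have hbT : b ^ lam ≠ ∞ := ENNReal.rpow_ne_top_of_nonneg hl0.le hbg
  have hc0 : c ≠ 0 := mul_ne_zero hane hbne
  have hcT : c ≠ ∞ := ENNReal.mul_ne_top haT hbT
  have hcinv : c⁻¹ = (a ^ (1 - lam))⁻¹ * (b ^ lam)⁻¹ :=
    ENNReal.mul_inv (Or.inl hane) (Or.inl haT)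
  set f' : ℝ → ℝ≥0∞ := fun x => f x * a⁻¹ with hf'
  set g' : ℝ → ℝ≥0∞ := fun x => g x * b⁻¹ with hg'
  set h' : ℝ → ℝ≥0∞ := fun x => h x * c⁻¹ with hh'
  have hexp : ∀ (u v : ℝ≥0∞), (u * a⁻¹) ^ (1 - lam) * (v * b⁻¹) ^ lam
      = u ^ (1 - lam) * v ^ lam * c⁻¹ := by
    intro u v
    rw [ENNReal.mul_rpow_of_nonneg _ _ (by linarith : (0:ℝ) ≤ 1 - lam),
      ENNReal.mul_rpow_of_nonneg _ _ hl0.le, ENNReal.inv_rpow, ENNReal.inv_rpow, hcinv,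
      mul_mul_mul_comm]
  have key := PL1_core hl0 hl1 (hf.mul_const _) (hg.mul_const _) (hh.mul_const _)
    (f := f') (g := g') (h := h') ?_ ?_ ?_ ?_ ?_
  · have hif' : ∫⁻ x, f' x = (∫⁻ x, f x) * a⁻¹ :=
      lintegral_mul_const' _ _ (ENNReal.inv_ne_top.mpr ha0)
    have hig' : ∫⁻ x, g' x = (∫⁻ x, g x) * b⁻¹ :=
      lintegral_mul_const' _ _ (ENNReal.inv_ne_top.mpr hb0)
    have hih' : ∫⁻ x, h' x = (∫⁻ x, h x) * c⁻¹ :=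
      lintegral_mul_const' _ _ (ENNReal.inv_ne_top.mpr hc0)
    rw [hif', hig', hih', hexp] at key
    exact (ENNReal.mul_le_mul_iff_left (ENNReal.inv_ne_zero.mpr hcT)
      (ENNReal.inv_ne_top.mpr hc0)).mp key
  · intro x
    calc f x * a⁻¹ ≤ a * a⁻¹ := mul_le_mul_left (le_iSup f x) _
      _ = 1 := ENNReal.mul_inv_cancel ha0 hbf
  · intro x
    calc g x * b⁻¹ ≤ b * b⁻¹ := mul_le_mul_left (le_iSup g x) _
      _ = 1 := ENNReal.mul_inv_cancel hb0 hbg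
  · rw [show (⨆ x, f' x) = (⨆ x, f x) * a⁻¹ from (ENNReal.iSup_mul f a⁻¹).symm]
    exact ENNReal.mul_inv_cancel ha0 hbf
  · rw [show (⨆ x, g' x) = (⨆ x, g x) * b⁻¹ from (ENNReal.iSup_mul g b⁻¹).symm]
    exact ENNReal.mul_inv_cancel hb0 hbg
  · intro x y
    rw [show f' x = f x * a⁻¹ from rfl, show g' y = g y * b⁻¹ from rfl, hexp]
    exact mul_le_mul_left (H x y) _

/-- One-dimensional Prékopa–Leindler inequality. -/
theorem PL1 {lam : ℝ} (hl0 : 0 < lam) (hl1 : lam < 1)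
    {f g h : ℝ → ℝ≥0∞} (hf : Measurable f) (hg : Measurable g) (hh : Measurable h)
    (H : ∀ x y, f x ^ (1 - lam) * g y ^ lam ≤ h ((1 - lam) * x + lam * y)) :
    (∫⁻ x, f x) ^ (1 - lam) * (∫⁻ x, g x) ^ lam ≤ ∫⁻ x, h x := by
  by_cases hif : ∫⁻ x, f x = 0
  · simp [hif, ENNReal.zero_rpow_of_pos (by linarith : (0:ℝ) < 1 - lam)]
  by_cases hig : ∫⁻ x, g x = 0
  · simp [hig, ENNReal.zero_rpow_of_pos hl0]
  set fn : ℕ → ℝ → ℝ≥0∞ := fun n x => min (f x) n with hfn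
  set gn : ℕ → ℝ → ℝ≥0∞ := fun n x => min (g x) n with hgn
  have hfnm : ∀ n, Measurable (fn n) := fun n => hf.min measurable_const
  have hgnm : ∀ n, Measurable (gn n) := fun n => hg.min measurable_const
  have hmono : ∀ (F : ℝ → ℝ≥0∞), Monotone (fun (n : ℕ) (x : ℝ) => min (F x) n) := by
    intro F n m hnm x
    exact min_le_min le_rfl (Nat.cast_le.mpr hnm)
  have hsup : ∀ (F : ℝ → ℝ≥0∞) (x : ℝ), (⨆ n : ℕ, min (F x) n) = F x := by
    intro F x
    apply le_antisymm (iSup_le fun n => min_le_left _ _)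
    rcases eq_or_ne (F x) ∞ with hFx | hFx
    · have : ∀ n : ℕ, min (F x) (n : ℝ≥0∞) = n := fun n => by rw [hFx]; exact min_eq_right le_top
      calc F x ≤ ⨆ n : ℕ, (n : ℝ≥0∞) := by rw [ENNReal.iSup_natCast]; exact le_top
        _ = ⨆ n : ℕ, min (F x) n := by exact iSup_congr fun n => (this n).symm
    · obtain ⟨n, hn⟩ := ENNReal.exists_nat_gt hFx
      calc F x = min (F x) n := (min_eq_left hn.le).symm
        _ ≤ ⨆ n : ℕ, min (F x) n := le_iSup (fun n : ℕ => min (F x) (n:ℝ≥0∞)) n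
  have hInt : ∀ (F : ℝ → ℝ≥0∞), Measurable F →
      (⨆ n : ℕ, ∫⁻ x, min (F x) n) = ∫⁻ x, F x := by
    intro F hF
    rw [← lintegral_iSup (fun n => hF.min measurable_const) (fun n m hnm x => hmono F hnm x)]
    exact lintegral_congr (hsup F)
  have hbound : ∀ n : ℕ, (∫⁻ x, fn n x) ^ (1 - lam) * (∫⁻ x, gn n x) ^ lam ≤ ∫⁻ x, h x := by
    intro n
    apply PL1_bdd hl0 hl1 (hfnm n) (hgnm n) hh
    · exact ne_top_of_le_ne_top (ENNReal.natCast_ne_top n) (iSup_le fun x => min_le_right _ _)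
    · exact ne_top_of_le_ne_top (ENNReal.natCast_ne_top n) (iSup_le fun x => min_le_right _ _)
    · intro x y
      calc fn n x ^ (1 - lam) * gn n y ^ lam
          ≤ f x ^ (1 - lam) * g y ^ lam :=
            mul_le_mul' (ENNReal.rpow_le_rpow (min_le_left _ _) (by linarith))
              (ENNReal.rpow_le_rpow (min_le_left _ _) hl0.le)
        _ ≤ h ((1 - lam) * x + lam * y) := H x y
  -- pass to the limit
  have hImono : Monotone (fun n : ℕ => ∫⁻ x, fn n x) :=
    fun n m hnm => lintegral_mono (fun x => hmono f hnm x)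
  have hJmono : Monotone (fun n : ℕ => ∫⁻ x, gn n x) :=
    fun n m hnm => lintegral_mono (fun x => hmono g hnm x)
  have hItend : Filter.Tendsto (fun n : ℕ => ∫⁻ x, fn n x) Filter.atTop (nhds (∫⁻ x, f x)) := by
    rw [← hInt f hf]
    exact tendsto_atTop_iSup hImono
  have hJtend : Filter.Tendsto (fun n : ℕ => ∫⁻ x, gn n x) Filter.atTop (nhds (∫⁻ x, g x)) := by
    rw [← hInt g hg]
    exact tendsto_atTop_iSup hJmono
  have hArpow : Filter.Tendsto (fun n : ℕ => (∫⁻ x, fn n x) ^ (1 - lam)) Filter.atTop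
      (nhds ((∫⁻ x, f x) ^ (1 - lam))) :=
    (ENNReal.continuous_rpow_const.tendsto _).comp hItend
  have hBrpow : Filter.Tendsto (fun n : ℕ => (∫⁻ x, gn n x) ^ lam) Filter.atTop
      (nhds ((∫⁻ x, g x) ^ lam)) :=
    (ENNReal.continuous_rpow_const.tendsto _).comp hJtend
  have hA0 : (∫⁻ x, f x) ^ (1 - lam) ≠ 0 := by
    rw [Ne, ENNReal.rpow_eq_zero_iff]
    push_neg
    exact ⟨fun h' => absurd h' hif, fun h' => by linarith⟩
  have hB0 : (∫⁻ x, g x) ^ lam ≠ 0 := by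
    rw [Ne, ENNReal.rpow_eq_zero_iff]
    push_neg
    exact ⟨fun h' => absurd h' hig, fun h' => by linarith⟩
  have hmul : Filter.Tendsto
      (fun n : ℕ => (∫⁻ x, fn n x) ^ (1 - lam) * (∫⁻ x, gn n x) ^ lam) Filter.atTop
      (nhds ((∫⁻ x, f x) ^ (1 - lam) * (∫⁻ x, g x) ^ lam)) :=
    ENNReal.Tendsto.mul hArpow (Or.inl hA0) hBrpow (Or.inl hB0)
  exact le_of_tendsto hmul (Filter.Eventually.of_forall hbound)

/-- Prékopa–Leindler inequality in `ℝⁿ`. -/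
theorem PLn : ∀ (n : ℕ) {lam : ℝ}, 0 < lam → lam < 1 →
    ∀ {f g h : (Fin n → ℝ) → ℝ≥0∞}, Measurable f → Measurable g → Measurable h →
    (∀ x y, f x ^ (1 - lam) * g y ^ lam ≤ h ((1 - lam) • x + lam • y)) →
    (∫⁻ x, f x) ^ (1 - lam) * (∫⁻ x, g x) ^ lam ≤ ∫⁻ x, h x := by
  intro n
  induction n with
  | zero =>
    intro lam hl0 hl1 f g h hf hg hh H
    have hconst : ∀ (F : (Fin 0 → ℝ) → ℝ≥0∞), ∫⁻ x, F x = F default := by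
      intro F
      have h1 : ∫⁻ x, F x = ∫⁻ _ : Fin 0 → ℝ, F default :=
        lintegral_congr (fun x => by rw [Subsingleton.elim x default])
      have h2 : (volume : Measure (Fin 0 → ℝ)) Set.univ = 1 := by
        rw [volume_pi, Measure.pi_univ]
        simp
      rw [h1, lintegral_const, h2, mul_one]
    rw [hconst, hconst, hconst]
    have := H default default
    rwa [Subsingleton.elim ((1 - lam) • (default : Fin 0 → ℝ) + lam • default) default] at this
  | succ n ih =>
    intro lam hl0 hl1 f g h hf hg hh H
    set e := MeasurableEquiv.piFinSuccAbove (fun _ : Fin (n+1) => ℝ) 0 with he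
    have mp : MeasurePreserving (⇑e) volume volume :=
      volume_preserving_piFinSuccAbove (fun _ : Fin (n+1) => ℝ) 0
    set f' : ℝ × (Fin n → ℝ) → ℝ≥0∞ := fun p => f (e.symm p) with hf'd
    set g' : ℝ × (Fin n → ℝ) → ℝ≥0∞ := fun p => g (e.symm p) with hg'd
    set h' : ℝ × (Fin n → ℝ) → ℝ≥0∞ := fun p => h (e.symm p) with hh'd
    have hf' : Measurable f' := hf.comp e.symm.measurable
    have hg' : Measurable g' := hg.comp e.symm.measurable
    have hh' : Measurable h' := hh.comp e.symm.measurable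
    have elin : ∀ (x y : Fin (n+1) → ℝ),
        e ((1 - lam) • x + lam • y) = (1 - lam) • (e x) + lam • (e y) := by
      intro x y
      rfl
    have etrans : ∀ (F : (Fin (n+1) → ℝ) → ℝ≥0∞), Measurable F →
        ∫⁻ x, F x = ∫⁻ t : ℝ, ∫⁻ x : Fin n → ℝ, F (e.symm (t, x)) := by
      intro F hF
      rw [← (MeasurePreserving.symm e mp).lintegral_comp hF]
      rw [show (volume : Measure (ℝ × (Fin n → ℝ))) = Measure.prod volume volume from
        Measure.volume_eq_prod _ _]
      exact lintegral_prod _ (hF.comp e.symm.measurable).aemeasurable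
    set F : ℝ → ℝ≥0∞ := fun t => ∫⁻ x, f' (t, x) with hFd
    set G : ℝ → ℝ≥0∞ := fun t => ∫⁻ x, g' (t, x) with hGd
    set Hh : ℝ → ℝ≥0∞ := fun t => ∫⁻ x, h' (t, x) with hHd
    have hFm : Measurable F := Measurable.lintegral_prod_right hf'
    have hGm : Measurable G := Measurable.lintegral_prod_right hg'
    have hHm : Measurable Hh := Measurable.lintegral_prod_right hh'
    have Hmarg : ∀ t₁ t₂ : ℝ, F t₁ ^ (1 - lam) * G t₂ ^ lam ≤ Hh ((1 - lam) * t₁ + lam * t₂) := by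
      intro t₁ t₂
      apply ih hl0 hl1 (hf'.comp measurable_prodMk_left)
        (hg'.comp measurable_prodMk_left) (hh'.comp measurable_prodMk_left)
      intro x y
      have key := H (e.symm (t₁, x)) (e.symm (t₂, y))
      have : (1 - lam) • (e.symm (t₁, x)) + lam • (e.symm (t₂, y))
          = e.symm ((1 - lam) * t₁ + lam * t₂, (1 - lam) • x + lam • y) := by
        apply e.injective
        rw [e.apply_symm_apply, elin, e.apply_symm_apply, e.apply_symm_apply]
        rfl
      rw [this] at key
      exact key
    calc (∫⁻ x, f x) ^ (1 - lam) * (∫⁻ x, g x) ^ lam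
        = (∫⁻ t, F t) ^ (1 - lam) * (∫⁻ t, G t) ^ lam := by
          rw [etrans f hf, etrans g hg]
      _ ≤ ∫⁻ t, Hh t := PL1 hl0 hl1 hFm hGm hHm Hmarg
      _ = ∫⁻ x, h x := (etrans h hh).symm

theorem bm_mult {n : ℕ} {lam : ℝ} (hl0 : 0 < lam) (hl1 : lam < 1)
    {A B : Set (Fin n → ℝ)} (hA : IsCompact A) (hB : IsCompact B) :
    volume A ^ (1 - lam) * volume B ^ lam ≤ volume ((1 - lam) • A + lam • B) := by
  set C : Set (Fin n → ℝ) := (1 - lam) • A + lam • B with hC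
  have hCc : IsCompact C := (hA.smul (1 - lam)).add (hB.smul lam)
  have key := PLn n hl0 hl1 (f := A.indicator 1) (g := B.indicator 1) (h := C.indicator 1)
    (measurable_const.indicator hA.measurableSet)
    (measurable_const.indicator hB.measurableSet)
    (measurable_const.indicator hCc.measurableSet) ?_
  · rwa [lintegral_indicator_one hA.measurableSet, lintegral_indicator_one hB.measurableSet,
      lintegral_indicator_one hCc.measurableSet] at key
  · intro x y
    by_cases hx : x ∈ A
    · by_cases hy : y ∈ B
      · have hmem : (1 - lam) • x + lam • y ∈ C :=
          Set.add_mem_add (Set.smul_mem_smul_set hx) (Set.smul_mem_smul_set hy)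
        simp [Set.indicator_of_mem, hx, hy, hmem]
      · simp [Set.indicator_of_notMem, hy, ENNReal.zero_rpow_of_pos hl0]
    · simp [Set.indicator_of_notMem, hx,
        ENNReal.zero_rpow_of_pos (by linarith : (0:ℝ) < 1 - lam)]

theorem bm_add {n : ℕ} (hn : 0 < n) {A B : Set (Fin n → ℝ)}
    (hA : IsCompact A) (hB : IsCompact B) (hAne : A.Nonempty) (hBne : B.Nonempty) :
    (volume A).toReal ^ (1/(n:ℝ)) + (volume B).toReal ^ (1/(n:ℝ))
      ≤ (volume (A + B)).toReal ^ (1/(n:ℝ)) := by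
  have hnR : (0:ℝ) < (n:ℝ) := by exact_mod_cast hn
  have hinv : (0:ℝ) < 1/(n:ℝ) := by positivity
  have hfA : volume A ≠ ∞ := hA.measure_lt_top.ne
  have hfB : volume B ≠ ∞ := hB.measure_lt_top.ne
  have hfAB : volume (A + B) ≠ ∞ := (hA.add hB).measure_lt_top.ne
  have hmonoAB : ∀ {S T : Set (Fin n → ℝ)}, S + T = A + B → T.Nonempty →
      volume S ≤ volume (A + B) := by
    intro S T hST ⟨t₀, ht₀⟩
    have hsub : S ⊆ (fun x => x + t₀) ⁻¹' (A + B) := by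
      intro x hx
      have : x + t₀ ∈ S + T := Set.add_mem_add hx ht₀
      rw [hST] at this
      exact this
    calc volume S ≤ volume ((fun x => x + t₀) ⁻¹' (A + B)) := measure_mono hsub
      _ = volume (A + B) := measure_preimage_add_right volume _ _
  rcases eq_or_ne (volume A) 0 with hA0 | hA0
  · rw [hA0]
    simp only [ENNReal.toReal_zero, Real.zero_rpow (ne_of_gt hinv), zero_add]
    apply Real.rpow_le_rpow ENNReal.toReal_nonneg _ hinv.le
    refine ENNReal.toReal_mono hfAB ?_
    obtain ⟨a₀, ha₀⟩ := hAne
    have hsub : B ⊆ (fun x => a₀ + x) ⁻¹' (A + B) := fun x hx => Set.add_mem_add ha₀ hx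
    calc volume B ≤ volume ((fun x => a₀ + x) ⁻¹' (A + B)) := measure_mono hsub
      _ = volume (A + B) := measure_preimage_add volume _ _
  rcases eq_or_ne (volume B) 0 with hB0 | hB0
  · rw [hB0]
    simp only [ENNReal.toReal_zero, Real.zero_rpow (ne_of_gt hinv), add_zero]
    apply Real.rpow_le_rpow ENNReal.toReal_nonneg _ hinv.le
    refine ENNReal.toReal_mono hfAB ?_
    obtain ⟨b₀, hb₀⟩ := hBne
    have hsub : A ⊆ (fun x => x + b₀) ⁻¹' (A + B) := fun x hx => Set.add_mem_add hx hb₀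
    calc volume A ≤ volume ((fun x => x + b₀) ⁻¹' (A + B)) := measure_mono hsub
      _ = volume (A + B) := measure_preimage_add_right volume _ _
  -- main case
  set va := (volume A).toReal with hva
  set vb := (volume B).toReal with hvb
  have hvaP : 0 < va := ENNReal.toReal_pos hA0 hfA
  have hvbP : 0 < vb := ENNReal.toReal_pos hB0 hfB
  set s := va ^ (1/(n:ℝ)) with hs
  set t := vb ^ (1/(n:ℝ)) with ht
  have hsP : 0 < s := Real.rpow_pos_of_pos hvaP _
  have htP : 0 < t := Real.rpow_pos_of_pos hvbP _
  have hstP : 0 < s + t := by linarith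
  set lam := t / (s + t) with hlam
  have hl0 : 0 < lam := div_pos htP hstP
  have hl1 : lam < 1 := (div_lt_one hstP).mpr (by linarith)
  have h1l : 1 - lam = s / (s + t) := by
    rw [hlam]
    field_simp
    ring
  have hpow : ∀ {v : ℝ}, 0 < v → (v ^ (1/(n:ℝ))) ^ n = v := by
    intro v hv
    rw [← Real.rpow_natCast (v ^ (1/(n:ℝ))) n, ← Real.rpow_mul hv.le]
    rw [one_div, inv_mul_cancel₀ (ne_of_gt hnR), Real.rpow_one]
  have hfr : Module.finrank ℝ (Fin n → ℝ) = n := Module.finrank_fin_fun ℝ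
  have hvol_smul : ∀ (c : ℝ) (S : Set (Fin n → ℝ)), 0 < c →
      volume (c • S) = ENNReal.ofReal (c ^ n) * volume S := by
    intro c S hc
    rw [Measure.addHaar_smul volume, hfr, abs_of_pos (pow_pos hc n)]
  have key := bm_mult hl0 hl1 (hA.smul s⁻¹) (hB.smul t⁻¹)
  have hA' : volume (s⁻¹ • A) = 1 := by
    rw [hvol_smul _ _ (inv_pos.mpr hsP), inv_pow, hpow hvaP,
      show volume A = ENNReal.ofReal va from (ENNReal.ofReal_toReal hfA).symm,
      ← ENNReal.ofReal_mul (inv_nonneg.mpr hvaP.le), inv_mul_cancel₀ (ne_of_gt hvaP),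
      ENNReal.ofReal_one]
  have hB' : volume (t⁻¹ • B) = 1 := by
    rw [hvol_smul _ _ (inv_pos.mpr htP), inv_pow, hpow hvbP,
      show volume B = ENNReal.ofReal vb from (ENNReal.ofReal_toReal hfB).symm,
      ← ENNReal.ofReal_mul (inv_nonneg.mpr hvbP.le), inv_mul_cancel₀ (ne_of_gt hvbP),
      ENNReal.ofReal_one]
  have hcomb : (1 - lam) • (s⁻¹ • A) + lam • (t⁻¹ • B) = (s + t)⁻¹ • (A + B) := by
    rw [smul_smul, smul_smul, h1l, hlam,
      show s / (s + t) * s⁻¹ = (s + t)⁻¹ by field_simp,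
      show t / (s + t) * t⁻¹ = (s + t)⁻¹ by field_simp,
      smul_add]
  rw [hA', hB', ENNReal.one_rpow, ENNReal.one_rpow, one_mul, hcomb,
    hvol_smul _ _ (inv_pos.mpr hstP), inv_pow] at key
  -- key : 1 ≤ ofReal (((s+t)^n)⁻¹) * volume (A + B)
  have hstn : 0 < (s + t) ^ n := pow_pos hstP n
  have key2 : ENNReal.ofReal ((s + t) ^ n) ≤ volume (A + B) := by
    calc ENNReal.ofReal ((s + t) ^ n) = ENNReal.ofReal ((s + t) ^ n) * 1 := (mul_one _).symm
      _ ≤ ENNReal.ofReal ((s + t) ^ n) * (ENNReal.ofReal (((s + t) ^ n)⁻¹) * volume (A + B)) :=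
          mul_le_mul_right key _
      _ = (ENNReal.ofReal ((s + t) ^ n) * ENNReal.ofReal (((s + t) ^ n)⁻¹)) * volume (A + B) :=
          (mul_assoc _ _ _).symm
      _ = volume (A + B) := by
          rw [← ENNReal.ofReal_mul hstn.le, mul_inv_cancel₀ (ne_of_gt hstn),
            ENNReal.ofReal_one, one_mul]
  have key3 : (s + t) ^ n ≤ (volume (A + B)).toReal :=
    (ENNReal.ofReal_le_iff_le_toReal hfAB).mp key2
  calc s + t = ((s + t) ^ n) ^ (1/(n:ℝ)) := by
        rw [← Real.rpow_natCast (s + t) n, ← Real.rpow_mul hstP.le,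
          mul_one_div, div_self (ne_of_gt hnR), Real.rpow_one]
    _ ≤ (volume (A + B)).toReal ^ (1/(n:ℝ)) :=
        Real.rpow_le_rpow hstn.le key3 hinv.le

theorem coord_le_norm {d : ℕ} (z : EuclideanSpace ℝ (Fin d)) (i : Fin d) : |z i| ≤ ‖z‖ := by
  have h := EuclideanSpace.norm_eq z
  have h2 : |z i| = Real.sqrt (|z i|^2) := by rw [Real.sqrt_sq_eq_abs, abs_abs]
  rw [h2, h]
  apply Real.sqrt_le_sqrt
  rw [sq_abs]
  have h3 : z i ^ 2 = ‖z i‖ ^ 2 := by rw [Real.norm_eq_abs, sq_abs]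
  rw [h3]
  exact Finset.single_le_sum (f := fun j => ‖z j‖^2) (fun j _ => by positivity) (Finset.mem_univ i)

/-- The map `η ↦ |K_η(u)|^{1/(d-1)}` is concave on `(0,∞)`, where `|·|` is the
`(d-1)`-dimensional Lebesgue measure on the hyperplane `H`, parametrized by a
linear isometry `φ` from `ℝ^{d-1}`. -/
theorem stmt7 (d : ℕ) (hd : 2 ≤ d)
    (N : EuclideanSpace ℝ (Fin d) → ℝ)
    (h_tri : ∀ x y, N (x + y) ≤ N x + N y)
    (h_smul : ∀ (a : ℝ) x, N (a • x) = |a| * N x)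
    (h_def : ∀ x, N x = 0 → x = 0)
    (u : EuclideanSpace ℝ (Fin d)) (hu : N u = 1)
    (φ : EuclideanSpace ℝ (Fin (d - 1)) →ₗᵢ[ℝ] EuclideanSpace ℝ (Fin d))
    (hsupp : ∀ v, 1 ≤ N (u + φ v)) :
    ConcaveOn ℝ (Set.Ioi (0 : ℝ))
      (fun η => (volume {v : EuclideanSpace ℝ (Fin (d - 1)) | N (u + φ v) ≤ 1 + η}).toReal
        ^ ((1 : ℝ) / ((d : ℝ) - 1))) := by
  classical
  -- basic properties of N
  have hN0 : N 0 = 0 := by simpa using h_smul 0 0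
  have hNneg : ∀ x, N (-x) = N x := fun x => by simpa using h_smul (-1) x
  have hNnonneg : ∀ x, 0 ≤ N x := by
    intro x
    have h1 := h_tri x (-x)
    rw [add_neg_cancel, hN0, hNneg] at h1
    linarith
  have hsub : ∀ x y, N x - N y ≤ N (x - y) := by
    intro x y
    have h1 := h_tri (x - y) y
    rw [sub_add_cancel] at h1
    linarith
  obtain ⟨C, hC0, hCle⟩ : ∃ C : ℝ, 0 ≤ C ∧ ∀ z, N z ≤ C * ‖z‖ := by
    refine ⟨∑ i : Fin d, N (EuclideanSpace.single i (1:ℝ)),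
      Finset.sum_nonneg (fun i _ => hNnonneg _), ?_⟩
    intro z
    have hz : z = ∑ i, z i • EuclideanSpace.single i (1:ℝ) := by
      have h := (EuclideanSpace.basisFun (Fin d) ℝ).sum_repr z
      simp only [EuclideanSpace.basisFun_apply, EuclideanSpace.basisFun_repr] at h
      exact h.symm
    calc N z = N (∑ i, z i • EuclideanSpace.single i (1:ℝ)) := by rw [← hz]
      _ ≤ ∑ i, N (z i • EuclideanSpace.single i (1:ℝ)) :=
          Finset.le_sum_of_subadditive N hN0.le h_tri _ _
      _ = ∑ i, |z i| * N (EuclideanSpace.single i (1:ℝ)) := by simp_rw [h_smul]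
      _ ≤ ∑ i, ‖z‖ * N (EuclideanSpace.single i (1:ℝ)) :=
          Finset.sum_le_sum (fun i _ =>
            mul_le_mul_of_nonneg_right (coord_le_norm z i) (hNnonneg _))
      _ = (∑ i : Fin d, N (EuclideanSpace.single i (1:ℝ))) * ‖z‖ := by
          rw [← Finset.mul_sum, mul_comm]
  have hNcont : Continuous N := by
    have hlip : LipschitzWith C.toNNReal N := by
      apply LipschitzWith.of_dist_le_mul
      intro x y
      rw [Real.dist_eq, dist_eq_norm, Real.coe_toNNReal C hC0]
      have h1 : N x - N y ≤ N (x - y) := hsub x y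
      have h2 : N y - N x ≤ N (x - y) := by
        have := hsub y x
        rwa [show y - x = -(x - y) from by abel, hNneg] at this
      have h3 : N (x - y) ≤ C * ‖x - y‖ := hCle _
      rw [abs_le]
      constructor <;> nlinarith [mul_nonneg hC0 (norm_nonneg (x - y))]
    exact hlip.continuous
  obtain ⟨c, hc0, hclow⟩ : ∃ c : ℝ, 0 < c ∧ ∀ x, c * ‖x‖ ≤ N x := by
    have hsne : (Metric.sphere (0 : EuclideanSpace ℝ (Fin d)) 1).Nonempty := by
      refine ⟨EuclideanSpace.single (⟨0, by omega⟩ : Fin d) (1:ℝ), ?_⟩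
      rw [mem_sphere_zero_iff_norm, EuclideanSpace.norm_single]
      norm_num
    obtain ⟨x₀, hx₀S, hmin⟩ := (isCompact_sphere (0 : EuclideanSpace ℝ (Fin d)) 1).exists_isMinOn
      hsne hNcont.continuousOn
    have hx₀norm : ‖x₀‖ = 1 := mem_sphere_zero_iff_norm.mp hx₀S
    have hx₀ne : x₀ ≠ 0 := by
      intro h0
      rw [h0, norm_zero] at hx₀norm
      norm_num at hx₀norm
    have hcpos : 0 < N x₀ :=
      lt_of_le_of_ne (hNnonneg x₀) (fun h => hx₀ne (h_def x₀ h.symm))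
    refine ⟨N x₀, hcpos, ?_⟩
    intro x
    rcases eq_or_ne x 0 with rfl | hx
    · simp [hN0]
    · have hxn : 0 < ‖x‖ := norm_pos_iff.mpr hx
      set y := ‖x‖⁻¹ • x with hy
      have hyS : y ∈ Metric.sphere (0 : EuclideanSpace ℝ (Fin d)) 1 := by
        rw [mem_sphere_zero_iff_norm, hy, norm_smul, Real.norm_eq_abs,
          abs_of_pos (inv_pos.mpr hxn), inv_mul_cancel₀ hxn.ne']
      have h1 : N x₀ ≤ N y := hmin hyS
      have h2 : N x = ‖x‖ * N y := by
        rw [show x = ‖x‖ • y from by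
          rw [hy, smul_smul, mul_inv_cancel₀ hxn.ne', one_smul], h_smul, abs_of_pos hxn]
        rw [show ‖(‖x‖:ℝ) • y‖ = ‖x‖ from by
          rw [norm_smul, Real.norm_eq_abs, abs_of_pos hxn, mem_sphere_zero_iff_norm.mp hyS,
            mul_one]]
      nlinarith
  -- properties of the sets K η
  set K : ℝ → Set (EuclideanSpace ℝ (Fin (d-1))) :=
    fun η => {v | N (u + φ v) ≤ 1 + η} with hKdef
  have hKcpt : ∀ η : ℝ, IsCompact (K η) := by
    intro η₀
    have hclosed : IsClosed (K η₀) := by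
      have : K η₀ = (fun v => N (u + φ v)) ⁻¹' Set.Iic (1 + η₀) := rfl
      rw [this]
      exact IsClosed.preimage (hNcont.comp (continuous_const.add φ.continuous)) isClosed_Iic
    have hbdd : K η₀ ⊆ Metric.closedBall 0 ((2 + η₀)/c) := by
      intro v hv
      rw [Metric.mem_closedBall, dist_zero_right]
      have h1 : N (φ v) ≤ 2 + η₀ := by
        have h2 := h_tri (u + φ v) (-u)
        rw [show u + φ v + -u = φ v from by abel, hNneg, hu] at h2
        have h3 : N (u + φ v) ≤ 1 + η₀ := hv
        linarith
      have h3 := hclow (φ v)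
      rw [φ.norm_map] at h3
      rw [le_div_iff₀ hc0]
      nlinarith
    exact Metric.isCompact_of_isClosed_isBounded hclosed
      (Metric.isBounded_closedBall.subset hbdd)
  have hK0 : ∀ η : ℝ, 0 ≤ η → (0 : EuclideanSpace ℝ (Fin (d-1))) ∈ K η := by
    intro η₀ hη₀
    show N (u + φ 0) ≤ 1 + η₀
    rw [map_zero, add_zero, hu]
    linarith
  -- rewrite the exponent
  have hm : 0 < d - 1 := by omega
  have hmR : (0:ℝ) < ((d-1:ℕ):ℝ) := by exact_mod_cast hm
  have hcast : (1:ℝ) / ((d:ℝ) - 1) = 1 / ((d-1:ℕ):ℝ) := by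
    rw [Nat.cast_sub (by omega : 1 ≤ d), Nat.cast_one]
  rw [show (fun η => (volume {v : EuclideanSpace ℝ (Fin (d - 1)) | N (u + φ v) ≤ 1 + η}).toReal
        ^ ((1 : ℝ) / ((d : ℝ) - 1)))
      = fun η => (volume (K η)).toReal ^ ((1:ℝ) / ((d-1:ℕ):ℝ)) from by
    funext η
    rw [hcast]]
  -- transfer to (Fin (d-1) → ℝ)
  set e := (MeasurableEquiv.toLp 2 (Fin (d-1) → ℝ)).symm with hedef
  have mp := EuclideanSpace.volume_preserving_symm_measurableEquiv_toLp (Fin (d-1))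
  have hecont : Continuous ⇑e := by
    rw [hedef, MeasurableEquiv.coe_toLp_symm]
    exact PiLp.continuous_ofLp 2 _
  have himg : ∀ S : Set (EuclideanSpace ℝ (Fin (d-1))), MeasurableSet S →
      volume (⇑e '' S) = volume S := by
    intro S hS
    rw [MeasurableEquiv.image_eq_preimage_symm]
    exact (MeasurePreserving.symm e mp).measure_preimage hS.nullMeasurableSet
  have himgadd : ∀ S T : Set (EuclideanSpace ℝ (Fin (d-1))),
      ⇑e '' (S + T) = ⇑e '' S + ⇑e '' T := by
    intro S T
    ext z
    constructor
    · rintro ⟨w, ⟨s, hs, t, ht, rfl⟩, rfl⟩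
      exact ⟨e s, ⟨s, hs, rfl⟩, e t, ⟨t, ht, rfl⟩, rfl⟩
    · rintro ⟨zs, ⟨s, hs, rfl⟩, zt, ⟨t, ht, rfl⟩, rfl⟩
      exact ⟨s + t, Set.add_mem_add hs ht, rfl⟩
  have hsmulvol : ∀ (r : ℝ), 0 < r → ∀ S : Set (EuclideanSpace ℝ (Fin (d-1))),
      volume (r • S) = ENNReal.ofReal (r ^ (d-1)) * volume S := by
    intro r hr S
    rw [Measure.addHaar_smul, finrank_euclideanSpace_fin, abs_of_pos (pow_pos hr _)]
  have hscal : ∀ (r : ℝ), 0 < r → ∀ η₀ : ℝ,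
      (volume (⇑e '' (r • K η₀))).toReal ^ ((1:ℝ)/((d-1:ℕ):ℝ))
        = r * (volume (K η₀)).toReal ^ ((1:ℝ)/((d-1:ℕ):ℝ)) := by
    intro r hr η₀
    rw [himg _ ((hKcpt η₀).smul r).measurableSet, hsmulvol r hr, ENNReal.toReal_mul,
      ENNReal.toReal_ofReal (pow_pos hr _).le,
      Real.mul_rpow (pow_pos hr _).le ENNReal.toReal_nonneg,
      ← Real.rpow_natCast r (d-1), ← Real.rpow_mul hr.le, mul_one_div,
      div_self (ne_of_gt hmR), Real.rpow_one]
  -- concavity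
  constructor
  · exact convex_Ioi 0
  intro η hη η' hη' a b ha hb hab
  simp only [smul_eq_mul]
  rcases eq_or_lt_of_le ha with ha0 | haP
  · rw [← ha0] at hab ⊢
    rw [zero_add] at hab
    rw [hab]
    norm_num
  rcases eq_or_lt_of_le hb with hb0 | hbP
  · rw [← hb0] at hab ⊢
    rw [add_zero] at hab
    rw [hab]
    norm_num
  -- main case
  have hηP : (0:ℝ) < η := hη
  have hη'P : (0:ℝ) < η' := hη'
  have hsum : a • K η + b • K η' ⊆ K (a * η + b * η') := by
    rintro z ⟨u1, ⟨v, hv, rfl⟩, u2, ⟨w, hw, rfl⟩, rfl⟩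
    show N (u + φ (a • v + b • w)) ≤ 1 + (a * η + b * η')
    have hv' : N (u + φ v) ≤ 1 + η := hv
    have hw' : N (u + φ w) ≤ 1 + η' := hw
    have hrw : u + φ (a • v + b • w) = a • (u + φ v) + b • (u + φ w) := by
      rw [map_add, φ.map_smul, φ.map_smul, smul_add, smul_add]
      rw [show a • u + a • φ v + (b • u + b • φ w)
          = (a • u + b • u) + (a • φ v + b • φ w) from by abel]
      rw [← add_smul, hab, one_smul]
    calc N (u + φ (a • v + b • w)) = N (a • (u + φ v) + b • (u + φ w)) := by rw [hrw]
      _ ≤ N (a • (u + φ v)) + N (b • (u + φ w)) := h_tri _ _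
      _ = a * N (u + φ v) + b * N (u + φ w) := by
          rw [h_smul, h_smul, abs_of_pos haP, abs_of_pos hbP]
      _ ≤ a * (1 + η) + b * (1 + η') :=
          add_le_add (mul_le_mul_of_nonneg_left hv' ha) (mul_le_mul_of_nonneg_left hw' hb)
      _ = 1 + (a * η + b * η') := by linear_combination hab
  set A : Set (Fin (d-1) → ℝ) := ⇑e '' (a • K η) with hAdef
  set B : Set (Fin (d-1) → ℝ) := ⇑e '' (b • K η') with hBdef
  have hAc : IsCompact A := (((hKcpt η).smul a).image hecont)
  have hBc : IsCompact B := (((hKcpt η').smul b).image hecont)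
  have hAne : A.Nonempty := (Set.Nonempty.smul_set ⟨0, hK0 η hη.le⟩).image _
  have hBne : B.Nonempty := (Set.Nonempty.smul_set ⟨0, hK0 η' hη'.le⟩).image _
  have key := bm_add hm hAc hBc hAne hBne
  rw [hAdef, hBdef, hscal a haP η, hscal b hbP η'] at key
  have hABsub : volume (A + B) ≤ volume (K (a * η + b * η')) := by
    rw [hAdef, hBdef, ← himgadd]
    have hcs : IsCompact (a • K η + b • K η') := ((hKcpt η).smul a).add ((hKcpt η').smul b)
    rw [himg _ hcs.measurableSet]
    exact measure_mono hsum
  have hfin : volume (K (a * η + b * η')) ≠ ∞ := (hKcpt _).measure_lt_top.ne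
  calc a * (volume (K η)).toReal ^ ((1:ℝ)/((d-1:ℕ):ℝ))
        + b * (volume (K η')).toReal ^ ((1:ℝ)/((d-1:ℕ):ℝ))
      ≤ (volume (A + B)).toReal ^ ((1:ℝ)/((d-1:ℕ):ℝ)) := key
    _ ≤ (volume (K (a * η + b * η'))).toReal ^ ((1:ℝ)/((d-1:ℕ):ℝ)) :=
        Real.rpow_le_rpow ENNReal.toReal_nonneg (ENNReal.toReal_mono hfin hABsub)
          (by positivity)
end

section
/- Let N be a norm on ℝ^d, u with N(u)=1, H a linear hyperplane with N(u+w) ≥ 1 for all w ∈ H, and K_η(u) = {v ∈ H : N(u+v) ≤ 1+η}. Then the function r(η) = |K_η(u)| / η^{d-1} is non-increasing on (0, ∞), and consequently h(η) = η^{-d}|K_η(u)| is strictly decreasing where it is positive. -/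
open MeasureTheory Pointwise

/-- `r(η) = |K_η(u)|/η^{d-1}` is non-increasing on `(0,∞)`, and consequently
`h(η) = η^{-d}|K_η(u)|` is strictly decreasing where it is positive. -/
theorem stmt8 (d : ℕ) (hd : 2 ≤ d)
    (N : EuclideanSpace ℝ (Fin d) → ℝ)
    (h_tri : ∀ x y, N (x + y) ≤ N x + N y)
    (h_smul : ∀ (a : ℝ) x, N (a • x) = |a| * N x)
    (h_def : ∀ x, N x = 0 → x = 0)
    (u : EuclideanSpace ℝ (Fin d)) (hu : N u = 1)
    (φ : EuclideanSpace ℝ (Fin (d - 1)) →ₗᵢ[ℝ] EuclideanSpace ℝ (Fin d))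
    (hsupp : ∀ v, 1 ≤ N (u + φ v)) :
    AntitoneOn
      (fun η => (volume {v : EuclideanSpace ℝ (Fin (d - 1)) | N (u + φ v) ≤ 1 + η}).toReal
        / η ^ (d - 1)) (Set.Ioi 0) ∧
    (∀ η₁ η₂ : ℝ, 0 < η₁ → η₁ < η₂ →
      0 < (volume {v : EuclideanSpace ℝ (Fin (d - 1)) | N (u + φ v) ≤ 1 + η₁}).toReal / η₁ ^ d →
      (volume {v : EuclideanSpace ℝ (Fin (d - 1)) | N (u + φ v) ≤ 1 + η₂}).toReal / η₂ ^ d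
        < (volume {v : EuclideanSpace ℝ (Fin (d - 1)) | N (u + φ v) ≤ 1 + η₁}).toReal / η₁ ^ d) := by
  set S : ℝ → Set (EuclideanSpace ℝ (Fin (d - 1))) :=
    fun η => {v | N (u + φ v) ≤ 1 + η} with hS
  set V : ℝ → ℝ := fun η => (volume (S η)).toReal with hV
  -- key inclusion
  have hsub : ∀ η₁ η₂ : ℝ, 0 < η₁ → η₁ ≤ η₂ → (η₁ / η₂) • S η₂ ⊆ S η₁ := by
    intro η₁ η₂ h1 h12
    have h2 : (0:ℝ) < η₂ := lt_of_lt_of_le h1 h12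
    set l : ℝ := η₁ / η₂ with hl
    have hl0 : 0 < l := div_pos h1 h2
    have hl1 : l ≤ 1 := (div_le_one h2).2 h12
    rintro x ⟨v, hv, rfl⟩
    simp only [hS, Set.mem_setOf_eq] at hv ⊢
    have heq : u + φ (l • v) = l • (u + φ v) + (1 - l) • u := by
      rw [φ.map_smul]; module
    calc N (u + φ (l • v)) = N (l • (u + φ v) + (1 - l) • u) := by rw [heq]
      _ ≤ N (l • (u + φ v)) + N ((1 - l) • u) := h_tri _ _
      _ = |l| * N (u + φ v) + |1 - l| * N u := by rw [h_smul, h_smul]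
      _ ≤ l * (1 + η₂) + (1 - l) * 1 := by
          rw [abs_of_pos hl0, abs_of_nonneg (by linarith), hu]
          have hN0 : (0:ℝ) ≤ N (u + φ v) := le_trans zero_le_one (hsupp v)
          nlinarith
      _ = 1 + l * η₂ := by ring
      _ = 1 + η₁ := by rw [hl]; field_simp
  -- key measure inequality
  have key : ∀ η₁ η₂ : ℝ, 0 < η₁ → η₁ ≤ η₂ → volume (S η₂) ≠ ⊤ →
      η₁ ^ (d - 1) * V η₂ ≤ η₂ ^ (d - 1) * V η₁ := by
    intro η₁ η₂ h1 h12 hfin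
    have h2 : (0:ℝ) < η₂ := lt_of_lt_of_le h1 h12
    have hmono : S η₁ ⊆ S η₂ := fun v hv => by simp only [hS, Set.mem_setOf_eq] at hv ⊢; linarith
    have hfin1 : volume (S η₁) ≠ ⊤ := fun h => hfin (top_le_iff.1 (h ▸ measure_mono hmono))
    have hmeas : volume ((η₁ / η₂) • S η₂) ≤ volume (S η₁) :=
      measure_mono (hsub η₁ η₂ h1 h12)
    rw [Measure.addHaar_smul] at hmeas
    rw [finrank_euclideanSpace_fin] at hmeas
    have hto : ENNReal.ofReal (|(η₁ / η₂) ^ (d - 1)|) * volume (S η₂) ≤ volume (S η₁) := hmeas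
    have := ENNReal.toReal_mono hfin1 hto
    rw [ENNReal.toReal_mul, ENNReal.toReal_ofReal (abs_nonneg _)] at this
    rw [abs_of_pos (pow_pos (div_pos h1 h2) _)] at this
    have hpow : (η₁ / η₂) ^ (d - 1) * η₂ ^ (d - 1) = η₁ ^ (d - 1) := by
      rw [div_pow]; field_simp
    calc η₁ ^ (d - 1) * V η₂ = η₂ ^ (d - 1) * ((η₁ / η₂) ^ (d - 1) * V η₂) := by
          rw [← mul_assoc, mul_comm (η₂ ^ (d-1)), hpow]
      _ ≤ η₂ ^ (d - 1) * V η₁ := by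
          exact mul_le_mul_of_nonneg_left this (le_of_lt (pow_pos h2 _))
  have hVnn : ∀ η, 0 ≤ V η := fun η => ENNReal.toReal_nonneg
  have anti : AntitoneOn (fun η => V η / η ^ (d - 1)) (Set.Ioi 0) := by
    intro η₁ hη₁ η₂ hη₂ h12
    simp only [Set.mem_Ioi] at hη₁ hη₂
    by_cases hfin : volume (S η₂) = ⊤
    · rw [hV]
      simp only [hfin, ENNReal.toReal_top]
      rw [zero_div]
      exact div_nonneg (hVnn η₁) (le_of_lt (pow_pos hη₁ _))
    · have := key η₁ η₂ hη₁ h12 hfin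
      rw [div_le_div_iff₀ (pow_pos hη₂ _) (pow_pos hη₁ _)]
      nlinarith [this]
  refine ⟨anti, ?_⟩
  intro η₁ η₂ h1 h12 hpos
  have h2 : (0:ℝ) < η₂ := lt_trans h1 h12
  have hd1 : d - 1 + 1 = d := by omega
  have hV1pos : 0 < V η₁ := by
    by_contra h
    have : V η₁ = 0 := le_antisymm (not_lt.1 h) (hVnn η₁)
    rw [show (volume (S η₁)).toReal = V η₁ from rfl, this, zero_div] at hpos
    exact lt_irrefl _ hpos
  by_cases hfin : volume (S η₂) = ⊤
  · have : V η₂ = 0 := by rw [hV]; simp [hfin]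
    rw [show (volume (S η₂)).toReal = V η₂ from rfl, this, zero_div]
    exact hpos
  · have hkey := key η₁ η₂ h1 (le_of_lt h12) hfin
    -- V η₂ / η₂^d ≤ V η₁ / (η₁^{d-1} η₂) < V η₁ / η₁^d
    have e1 : (η₁:ℝ) ^ d = η₁ ^ (d - 1) * η₁ := by rw [← pow_succ, hd1]
    have e2 : (η₂:ℝ) ^ d = η₂ ^ (d - 1) * η₂ := by rw [← pow_succ, hd1]
    rw [show (volume (S η₂)).toReal = V η₂ from rfl,
        show (volume (S η₁)).toReal = V η₁ from rfl, e1, e2]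
    rw [div_lt_div_iff₀ (by positivity) (by positivity)]
    have hp1 : (0:ℝ) < η₁ ^ (d-1) := pow_pos h1 _
    have hp2 : (0:ℝ) < η₂ ^ (d-1) := pow_pos h2 _
    nlinarith [mul_le_mul_of_nonneg_right hkey (le_of_lt h1),
      mul_pos (mul_pos hV1pos hp2) (sub_pos.2 h12)]
end

section
/- Let N be a norm on ℝ^d such that B_{‖·‖₂}(α) ⊆ B_N(1) ⊆ B_{‖·‖₂}(β) for some 0 < α ≤ β. Let u ∈ ℝ^d with N(u) = 1, H a linear hyperplane such that N(u+w) ≥ 1 for all w ∈ H, and let u* be the vector orthogonal (for the Euclidean inner product) to H with u·u* = 1. Then β^{-1} ≤ ‖u*‖₂ ≤ α^{-1}. -/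
/-- If `B₂(α) ⊆ B_N(1) ⊆ B₂(β)`, `N u = 1`, `u + H` is a supporting hyperplane of
`B_N(1)` at `u` and `u*` is the Euclidean normal to `H` with `⟪u, u*⟫ = 1`, then
`β⁻¹ ≤ ‖u*‖ ≤ α⁻¹`. -/
theorem stmt10 (d : ℕ) (hd : 2 ≤ d)
    (N : EuclideanSpace ℝ (Fin d) → ℝ)
    (h_tri : ∀ x y, N (x + y) ≤ N x + N y)
    (h_smul : ∀ (a : ℝ) x, N (a • x) = |a| * N x)
    (h_def : ∀ x, N x = 0 → x = 0)
    (α β : ℝ) (hα : 0 < α) (hαβ : α ≤ β)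
    (hball1 : ∀ x : EuclideanSpace ℝ (Fin d), ‖x‖ ≤ α → N x ≤ 1)
    (hball2 : ∀ x : EuclideanSpace ℝ (Fin d), N x ≤ 1 → ‖x‖ ≤ β)
    (u : EuclideanSpace ℝ (Fin d)) (hu : N u = 1)
    (H : Submodule ℝ (EuclideanSpace ℝ (Fin d))) (hH : Module.finrank ℝ H = d - 1)
    (hsupp : ∀ w ∈ H, 1 ≤ N (u + w))
    (ustar : EuclideanSpace ℝ (Fin d))
    (horth : ∀ w ∈ H, (inner ℝ ustar w : ℝ) = 0)
    (hdual : (inner ℝ u ustar : ℝ) = 1) :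
    β⁻¹ ≤ ‖ustar‖ ∧ ‖ustar‖ ≤ α⁻¹ := by
  have hβ : 0 < β := lt_of_lt_of_le hα hαβ
  have hust : ustar ≠ 0 := by
    rintro rfl; simp at hdual
  have hustn : 0 < ‖ustar‖ := norm_pos_iff.mpr hust
  constructor
  · have hub : ‖u‖ ≤ β := hball2 u (le_of_eq hu)
    have h1 : (1:ℝ) ≤ ‖u‖ * ‖ustar‖ := hdual ▸ real_inner_le_norm u ustar
    rw [inv_le_iff_one_le_mul₀ hβ]
    nlinarith [norm_nonneg u]
  · have hHle : H ≤ (ℝ ∙ ustar)ᗮ := by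
      intro w hw
      rw [Submodule.mem_orthogonal_singleton_iff_inner_right]
      exact horth w hw
    have hdim : Module.finrank ℝ ((ℝ ∙ ustar)ᗮ : Submodule ℝ (EuclideanSpace ℝ (Fin d))) = d - 1 := by
      have h1 : Module.finrank ℝ (ℝ ∙ ustar) = 1 := finrank_span_singleton hust
      have h2 := Submodule.finrank_add_finrank_orthogonal (K := (ℝ ∙ ustar))
      rw [h1, finrank_euclideanSpace_fin] at h2
      omega
    have hHeq : H = (ℝ ∙ ustar)ᗮ :=
      Submodule.eq_of_le_of_finrank_eq hHle (by rw [hH, hdim])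
    have key : ∀ x : EuclideanSpace ℝ (Fin d), N x ≤ 1 → (inner ℝ ustar x : ℝ) ≤ 1 := by
      intro x hx
      by_contra hlt
      push_neg at hlt
      set t : ℝ := inner ℝ ustar x with ht
      have ht0 : (0:ℝ) < t := lt_trans one_pos hlt
      have hw : x - t • u ∈ H := by
        rw [hHeq, Submodule.mem_orthogonal_singleton_iff_inner_right]
        have h2 : (inner ℝ ustar u : ℝ) = 1 := by rw [real_inner_comm]; exact hdual
        rw [inner_sub_right, real_inner_smul_right, h2]
        ring
      have heq : t • (u + t⁻¹ • (x - t • u)) = x := by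
        rw [smul_add, smul_smul, mul_inv_cancel₀ ht0.ne', one_smul]
        module
      have hsup2 : 1 ≤ N (u + t⁻¹ • (x - t • u)) :=
        hsupp _ (Submodule.smul_mem _ _ hw)
      have : t ≤ N x := by
        calc t = t * 1 := (mul_one t).symm
          _ ≤ t * N (u + t⁻¹ • (x - t • u)) := mul_le_mul_of_nonneg_left hsup2 ht0.le
          _ = |t| * N (u + t⁻¹ • (x - t • u)) := by rw [abs_of_pos ht0]
          _ = N (t • (u + t⁻¹ • (x - t • u))) := (h_smul _ _).symm
          _ = N x := by rw [heq]
      linarith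
    have hx1 : N ((α / ‖ustar‖) • ustar) ≤ 1 := by
      apply hball1
      rw [norm_smul, Real.norm_eq_abs, abs_of_pos (div_pos hα hustn),
        div_mul_cancel₀ _ hustn.ne']
    have hkey := key _ hx1
    rw [real_inner_smul_right, real_inner_self_eq_norm_sq] at hkey
    rw [show α / ‖ustar‖ * ‖ustar‖ ^ 2 = α * ‖ustar‖ * (‖ustar‖ / ‖ustar‖) by ring,
      div_self hustn.ne', mul_one] at hkey
    rw [show α⁻¹ = 1/α from (one_div α).symm, le_div_iff₀ hα]
    linarith
end
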